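/- Let M = [a,b) and N = [c,d) be interval modules (0 ≤ a < b, 0 ≤ c < d). If m₁ ≥ m₂, then, with D = min{m₁, m₂} = m₂, exactly one of the two sets S_{M,N}, S_{N,M} has nonempty intersection with the ray [D, ∞). -/

import Mathlib

open scoped NNReal

/-- A persistence module: a functor from `[0,∞)` to real vector spaces. -/
structure PM where
  V : ℝ≥0 → Type
  [grp : ∀ x, AddCommGroup (V x)]
  [mod : ∀ x, Module ℝ (V x)]
  map : ∀ {x y : ℝ≥0}, x ≤ y → (V x →ₗ[ℝ] V y)
  map_id : ∀ x : ℝ≥0, map (le_refl x) = LinearMap.id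
  map_comp : ∀ {x y z : ℝ≥0} (h1 : x ≤ y) (h2 : y ≤ z),
    (map h2).comp (map h1) = map (h1.trans h2)

attribute [instance] PM.grp PM.mod

/-- A morphism of persistence modules. -/
structure PM.Hom (M N : PM) where
  app : ∀ x : ℝ≥0, M.V x →ₗ[ℝ] N.V x
  comm : ∀ {x y : ℝ≥0} (h : x ≤ y), (app y).comp (M.map h) = (N.map h).comp (app x)

/-- The shifted module `M·ε`. -/
def PM.shift (M : PM) (ε : ℝ≥0) : PM where
  V x := M.V (x + ε)
  grp x := inferInstance
  mod x := inferInstance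
  map h := M.map (add_le_add h (le_refl ε))
  map_id x := M.map_id (x + ε)
  map_comp h1 h2 := M.map_comp _ _

noncomputable def intervalSub (α β : ℝ) (x : ℝ≥0) : Submodule ℝ ℝ :=
  if α ≤ (x : ℝ) ∧ (x : ℝ) < β then ⊤ else ⊥

/-- The interval module `[α,β)`. -/
noncomputable def intervalModule (α β : ℝ) : PM where
  V x := ↥(intervalSub α β x)
  grp x := inferInstance
  mod x := inferInstance
  map {x y} h := LinearMap.codRestrict _
      ((if α ≤ (x : ℝ) ∧ (y : ℝ) < β then (1 : ℝ) else 0) • (intervalSub α β x).subtype)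
      (by
        intro v
        by_cases hy : α ≤ (y : ℝ) ∧ (y : ℝ) < β
        · simp [intervalSub, hy]
        · have hc : ¬(α ≤ (x : ℝ) ∧ (y : ℝ) < β) := by
            intro hc
            exact hy ⟨le_trans hc.1 (by exact_mod_cast h), hc.2⟩
          simp only [if_neg hc, zero_smul, LinearMap.zero_apply]
          exact Submodule.zero_mem _)
  map_id x := by
    ext v
    by_cases hx : α ≤ (x : ℝ) ∧ (x : ℝ) < β
    · simp [hx]
    · have hv : (v : ℝ) = 0 := by
        have h2 := v.2
        simp only [intervalSub, if_neg hx, Submodule.mem_bot] at h2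
        exact h2
      simp [hx, hv]
  map_comp {x y z} h1 h2 := by
    ext v
    by_cases hC : α ≤ (x : ℝ) ∧ (z : ℝ) < β
    · have hA : α ≤ (x : ℝ) ∧ (y : ℝ) < β :=
        ⟨hC.1, lt_of_le_of_lt (by exact_mod_cast h2) hC.2⟩
      have hB : α ≤ (y : ℝ) ∧ (z : ℝ) < β :=
        ⟨le_trans hC.1 (by exact_mod_cast h1), hC.2⟩
      simp [hA, hB, hC]
    · rcases not_and_or.mp hC with hx | hz
      · have hA : ¬(α ≤ (x : ℝ) ∧ (y : ℝ) < β) := fun h => hx h.1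
        simp [hA, hC]
        split_ifs <;> simp
      · have hB : ¬(α ≤ (y : ℝ) ∧ (z : ℝ) < β) := fun h => hz h.2
        simp [hB, hC]

/-- `Hom(M,N) ≠ {0}`: there is a nonzero morphism from `M` to `N`. -/
def HomNeZero (M N : PM) : Prop := ∃ F : PM.Hom M N, ∃ x, F.app x ≠ 0

/-- `S_{M,N} = {x ≥ 0 : Hom(M, N·x) ≠ {0}}`. -/
noncomputable def Sset (M N : PM) : Set ℝ :=
  {x : ℝ | 0 ≤ x ∧ HomNeZero M (N.shift x.toNNReal)}

/-- The canonical morphism `Π_M^{M·τ} : M → M·τ`. -/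
def PM.pi (M : PM) (τ : ℝ≥0) : M.Hom (M.shift τ) where
  app x := M.map le_self_add
  comm {x y} h := by
    show (M.map le_self_add).comp (M.map h) =
      (M.map (add_le_add h (le_refl τ))).comp (M.map le_self_add)
    rw [M.map_comp, M.map_comp]

/-- The pair `(Φ, Ψ)` is an `ε`-interleaving between `M` and `N`:
`(Ψ·ε) ∘ Φ = Π_M^{M·2ε}` and `(Φ·ε) ∘ Ψ = Π_N^{N·2ε}` (expressed pointwise). -/
def IsInterleaving (M N : PM) (ε : ℝ≥0)
    (Φ : M.Hom (N.shift ε)) (Ψ : N.Hom (M.shift ε)) : Prop :=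
  (∀ x : ℝ≥0, (Ψ.app (x + ε)).comp (Φ.app x) =
      M.map (le_self_add.trans le_self_add : x ≤ x + ε + ε)) ∧
  (∀ x : ℝ≥0, (Φ.app (x + ε)).comp (Ψ.app x) =
      N.map (le_self_add.trans le_self_add : x ≤ x + ε + ε))

lemma mem_intervalSub_elim {α β : ℝ} {x : ℝ≥0} (v : ↥(intervalSub α β x))
    (h : ¬(α ≤ (x : ℝ) ∧ (x : ℝ) < β)) : v = 0 := by
  have h2 := v.2
  simp only [intervalSub, if_neg h, Submodule.mem_bot] at h2
  exact Subtype.ext h2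

/-- The canonical nonzero-candidate morphism `[a,b) → [c,d)·x`. -/
noncomputable def homOf (a b c d : ℝ) (x : ℝ≥0) (hca : c ≤ a + x) (hdb : d ≤ b + x) :
    PM.Hom (intervalModule a b) ((intervalModule c d).shift x) where
  app t := LinearMap.codRestrict (intervalSub c d (t + x))
    ((if a ≤ (t : ℝ) ∧ ((t : ℝ) + (x : ℝ) < d) then (1 : ℝ) else 0) •
      (intervalSub a b t).subtype)
    (by
      intro v
      by_cases h : a ≤ (t : ℝ) ∧ ((t : ℝ) + (x : ℝ) < d)
      · have h2 : c ≤ ((t + x : ℝ≥0) : ℝ) ∧ ((t + x : ℝ≥0) : ℝ) < d := by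
          push_cast
          exact ⟨by linarith [h.1], h.2⟩
        have he : intervalSub c d (t + x) = ⊤ := by
          simp only [intervalSub, if_pos h2]
        rw [he]
        exact Submodule.mem_top
      · simp only [if_neg h, zero_smul, LinearMap.zero_apply]
        exact Submodule.zero_mem _)
  comm {s t} h := by
    ext v
    apply Subtype.ext
    by_cases hv : a ≤ (s : ℝ) ∧ (s : ℝ) < b
    · have hst : (s : ℝ) ≤ (t : ℝ) := by exact_mod_cast h
      by_cases htd : (t : ℝ) + (x : ℝ) < d
      · have f1 : a ≤ (t : ℝ) := le_trans hv.1 hst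
        have f2 : a ≤ (s : ℝ) := hv.1
        have f3 : (t : ℝ) < b := by linarith
        have f4 : c ≤ (s : ℝ) + (x : ℝ) := by linarith
        have f5 : (s : ℝ) + (x : ℝ) < d := by linarith
        have f6 : (s : ℝ) < b := hv.2
        simp [intervalModule, PM.shift, NNReal.coe_add, f1, f2, f3, f4, f5, f6, htd]
        rfl
      · have c1 : ¬(a ≤ (t : ℝ) ∧ (t : ℝ) + (x : ℝ) < d) := fun hh => htd hh.2
        have c3 : ¬(c ≤ (s : ℝ) + (x : ℝ) ∧ (t : ℝ) + (x : ℝ) < d) := fun hh => htd hh.2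
        simp [intervalModule, PM.shift, NNReal.coe_add, c1, c3]
        rfl
    · have hv0 : v = 0 := mem_intervalSub_elim v hv
      simp [hv0]

lemma key_iff (a b c d D : ℝ) (ha : 0 ≤ a) (hab : a < b) (hc : 0 ≤ c) (hcd : c < d)
    (hD : 0 < D) :
    (Sset (intervalModule a b) (intervalModule c d) ∩ Set.Ici D).Nonempty ↔ D < d - a := by
  constructor
  · rintro ⟨x, ⟨hx0, F, t, hFt⟩, hxD⟩
    have hxc : ((x.toNNReal : ℝ)) = x := Real.coe_toNNReal x hx0
    have h1 : a ≤ (t : ℝ) ∧ (t : ℝ) < b := by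
      by_contra hcon
      apply hFt
      ext v
      have hv0 : v = 0 := mem_intervalSub_elim v hcon
      simp [hv0]
    have h2 : c ≤ ((t + x.toNNReal : ℝ≥0) : ℝ) ∧ ((t + x.toNNReal : ℝ≥0) : ℝ) < d := by
      by_contra hcon
      apply hFt
      ext v
      apply Subtype.ext
      have hm := (F.app t v).2
      simp only [intervalSub, if_neg hcon, Submodule.mem_bot] at hm
      exact hm
    have h3 : (t : ℝ) + x < d := by
      have hh := h2.2
      push_cast at hh
      rw [hxc] at hh
      exact hh
    have hDx : D ≤ x := hxD
    linarith [h1.1]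
  · intro hDd
    set x : ℝ := max D (max (c - a) (d - b)) with hxdef
    have hx0 : 0 ≤ x := le_trans hD.le (le_max_left _ _)
    have hxc : ((x.toNNReal : ℝ)) = x := Real.coe_toNNReal x hx0
    have hxca : c - a ≤ x := le_trans (le_max_left _ _) (le_max_right _ _)
    have hxdb : d - b ≤ x := le_trans (le_max_right _ _) (le_max_right _ _)
    have hxda : x < d - a := max_lt hDd (max_lt (by linarith) (by linarith))
    refine ⟨x, ⟨⟨hx0, ?_⟩, Set.mem_Ici.mpr (le_max_left _ _)⟩⟩
    refine ⟨homOf a b c d x.toNNReal (by rw [hxc]; linarith) (by rw [hxc]; linarith),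
      a.toNNReal, ?_⟩
    have hat : ((a.toNNReal : ℝ)) = a := Real.coe_toNNReal a ha
    have hmem : (1 : ℝ) ∈ intervalSub a b a.toNNReal := by
      simp only [intervalSub, if_pos (show a ≤ ((a.toNNReal : ℝ)) ∧ ((a.toNNReal : ℝ)) < b by
        rw [hat]; exact ⟨le_refl a, hab⟩)]
      trivial
    intro h0
    have hcond : a ≤ ((a.toNNReal : ℝ)) ∧ ((a.toNNReal : ℝ)) + ((x.toNNReal : ℝ)) < d := by
      rw [hat, hxc]; exact ⟨le_refl a, by linarith⟩
    have hval : (if a ≤ ((a.toNNReal : ℝ)) ∧ ((a.toNNReal : ℝ)) + ((x.toNNReal : ℝ)) < d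
        then (1 : ℝ) else 0) • (1 : ℝ) = 0 :=
      congrArg Subtype.val (congrArg (fun f =>
        (f ⟨1, hmem⟩ : (((intervalModule c d).shift x.toNNReal).V a.toNNReal))) h0)
    rw [if_pos hcond] at hval
    norm_num at hval

theorem stmt5 (a b c d m₁ m₂ D : ℝ) (ha : 0 ≤ a) (hab : a < b) (hc : 0 ≤ c) (hcd : c < d)
    (hm1 : m₁ = max |a - c| |b - d|) (hm2 : m₂ = max ((b - a) / 2) ((d - c) / 2))
    (hm : m₁ ≥ m₂) (hD : D = min m₁ m₂) :
    D = m₂ ∧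
    Xor' ((Sset (intervalModule a b) (intervalModule c d) ∩ Set.Ici D).Nonempty)
         ((Sset (intervalModule c d) (intervalModule a b) ∩ Set.Ici D).Nonempty) := by
  have hDm : D = m₂ := by rw [hD, min_eq_right hm]
  have hm2b : b - a ≤ 2 * m₂ := by
    rw [hm2]; have := le_max_left ((b - a) / 2) ((d - c) / 2); linarith
  have hm2d : d - c ≤ 2 * m₂ := by
    rw [hm2]; have := le_max_right ((b - a) / 2) ((d - c) / 2); linarith
  have hD0 : 0 < D := by
    rw [hDm, hm2]
    have := le_max_left ((b - a) / 2) ((d - c) / 2)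
    linarith
  have hP := key_iff a b c d D ha hab hc hcd hD0
  have hQ := key_iff c d a b D hc hcd ha hab hD0
  refine ⟨hDm, ?_⟩
  have hmm : m₂ ≤ max |a - c| |b - d| := by rw [← hm1]; exact hm
  rcases lt_or_ge D (d - a) with h1 | h1 <;> rcases lt_or_ge D (b - c) with h2 | h2
  · exfalso
    rcases le_max_iff.mp hmm with hh | hh
    · rcases le_abs.mp hh with hh2 | hh2 <;> rw [hDm] at h1 h2 <;> linarith
    · rcases le_abs.mp hh with hh2 | hh2 <;> rw [hDm] at h1 h2 <;> linarith
  · exact Or.inl ⟨hP.mpr h1, fun hq => absurd (hQ.mp hq) (not_lt.mpr h2)⟩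
  · exact Or.inr ⟨hQ.mpr h2, fun hp => absurd (hP.mp hp) (not_lt.mpr h1)⟩
  · exfalso
    rw [hDm] at h1 h2
    have e1 : |a - c| < m₂ := abs_lt.mpr ⟨by linarith, by linarith⟩
    have e2 : |b - d| < m₂ := abs_lt.mpr ⟨by linarith, by linarith⟩
    have : max |a - c| |b - d| < m₂ := max_lt e1 e2
    linarith [hmm]
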